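/- Let T be a rooted tree with n vertices, regarded as a poset where the root is the maximum and u ≤ v iff v lies on the path from the root to u... (i.e., ancestors are larger). Then the number of linear extensions of T (bijective order-preserving labelings by {1,...,n}) equals n! divided by the product over all vertices v of h(v), where h(v) is the number of vertices in the subtree rooted at v. -/

import Mathlib

open Finset

private lemma ncard_setOf_eq {α : Type*} [Fintype α] (p : α → Prop) [DecidablePred p] :
    Set.ncard {x | p x} = (Finset.univ.filter p).card := by
  rw [Set.ncard_eq_toFinset_card', Set.toFinset_setOf]

private theorem tree_key : ∀ (n : ℕ) (V : Type) [Fintype V] [PartialOrder V],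
    Fintype.card V = n → (∀ v : V, IsChain (· ≤ ·) {u : V | v ≤ u}) →
    Set.ncard {f : V → Fin n | Function.Bijective f ∧ ∀ u v : V, u ≤ v → f u ≤ f v} *
        ∏ v : V, Set.ncard {u : V | u ≤ v} = n.factorial := by
  intro n
  induction n with
  | zero =>
    intro V _ _ hcard _
    have hV : IsEmpty V := Fintype.card_eq_zero_iff.mp hcard
    have h1 : {f : V → Fin 0 | Function.Bijective f ∧ ∀ u v : V, u ≤ v → f u ≤ f v}
        = Set.univ := by
      ext f
      simp only [Set.mem_setOf_eq, Set.mem_univ, iff_true]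
      exact ⟨⟨fun a => isEmptyElim a, fun b => isEmptyElim b⟩, fun u => isEmptyElim u⟩
    rw [h1, Set.ncard_univ, Nat.card_eq_fintype_card]
    simp
  | succ k ih =>
    intro V _ _ hcard hchain
    classical
    -- the finset of maximal elements
    set M : Finset V := univ.filter (fun m : V => ∀ w, m ≤ w → w = m) with hM
    have hmemM : ∀ m : V, m ∈ M ↔ ∀ w, m ≤ w → w = m := by
      intro m; simp [hM]
    have hexists : ∀ v : V, ∃ m ∈ M, v ≤ m := by
      intro v
      obtain ⟨m, hm, hmax'⟩ := Finset.exists_maximal (s := univ.filter (fun u => v ≤ u))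
        ⟨v, by simp⟩
      replace hm : m ∈ univ.filter (fun u => v ≤ u) := hm
      have hmax : ∀ x ∈ univ.filter (fun u => v ≤ u), ¬ m < x :=
        fun x hx hlt => lt_irrefl m (lt_of_lt_of_le hlt (hmax' hx hlt.le))
      rw [mem_filter] at hm
      refine ⟨m, (hmemM m).2 ?_, hm.2⟩
      intro w hw
      have hw' : w ∈ univ.filter (fun u => v ≤ u) := by
        simp [le_trans hm.2 hw]
      by_contra hne
      exact hmax w hw' (lt_of_le_of_ne hw (Ne.symm hne))
    have huniq : ∀ v : V, ∀ m₁ ∈ M, ∀ m₂ ∈ M, v ≤ m₁ → v ≤ m₂ → m₁ = m₂ := by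
      intro v m₁ h₁ m₂ h₂ hv₁ hv₂
      rcases eq_or_ne m₁ m₂ with h | h
      · exact h
      · rcases hchain v hv₁ hv₂ h with h' | h'
        · exact ((hmemM m₁).1 h₁ m₂ h').symm
        · exact (hmemM m₂).1 h₂ m₁ h'
    have hdisjA : ∀ m₁ ∈ M, ∀ m₂ ∈ M, m₁ ≠ m₂ →
        Disjoint (univ.filter (fun u : V => u ≤ m₁)) (univ.filter (fun u : V => u ≤ m₂)) := by
      intro m₁ h₁ m₂ h₂ hne
      rw [Finset.disjoint_left]
      intro u hu₁ hu₂
      rw [mem_filter] at hu₁ hu₂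
      exact hne (huniq u m₁ h₁ m₂ h₂ hu₁.2 hu₂.2)
    -- Step A : sum of subtree sizes over maximal elements
    have hsum : ∑ m ∈ M, (univ.filter (fun u : V => u ≤ m)).card = k + 1 := by
      have hbi : M.biUnion (fun m => univ.filter (fun u : V => u ≤ m)) = univ := by
        apply Finset.eq_univ_iff_forall.mpr
        intro v
        obtain ⟨m, hm, hv⟩ := hexists v
        exact Finset.mem_biUnion.mpr ⟨m, hm, by simp [hv]⟩
      have h2 := Finset.card_biUnion hdisjA
      rw [hbi, Finset.card_univ, hcard] at h2
      exact h2.symm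
    -- the extension finset
    set E : Finset (V → Fin (k+1)) :=
      univ.filter (fun f => Function.Bijective f ∧ ∀ u v : V, u ≤ v → f u ≤ f v) with hE
    have hEncard :
        Set.ncard {f : V → Fin (k+1) | Function.Bijective f ∧ ∀ u v : V, u ≤ v → f u ≤ f v}
          = E.card := ncard_setOf_eq _
    -- partition by the preimage of the top label
    have hEpart : E = M.biUnion (fun m => E.filter (fun f => f m = Fin.last k)) := by
      apply Finset.Subset.antisymm
      · intro f hf
        have hf' := (mem_filter.mp hf).2
        obtain ⟨m, hm⟩ := hf'.1.2 (Fin.last k)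
        have hmM : m ∈ M := by
          refine (hmemM m).2 (fun w hw => ?_)
          have := hf'.2 m w hw
          rw [hm] at this
          exact hf'.1.1 ((le_antisymm (Fin.le_last _) this).trans hm.symm)
        exact mem_biUnion.mpr ⟨m, hmM, mem_filter.mpr ⟨hf, hm⟩⟩
      · intro f hf
        obtain ⟨m, -, hf'⟩ := mem_biUnion.mp hf
        exact (mem_filter.mp hf').1
    have hdisj : ∀ m₁ ∈ M, ∀ m₂ ∈ M, m₁ ≠ m₂ →
        Disjoint (E.filter (fun f => f m₁ = Fin.last k))
          (E.filter (fun f => f m₂ = Fin.last k)) := by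
      intro m₁ h₁ m₂ h₂ hne
      rw [Finset.disjoint_left]
      intro f hf₁ hf₂
      rw [mem_filter] at hf₁ hf₂
      have hinj := ((mem_filter.mp hf₁.1).2).1.1
      exact hne (hinj (hf₁.2.trans hf₂.2.symm))
    -- the per-maximal-element count
    have hper : ∀ m ∈ M, (E.filter (fun f => f m = Fin.last k)).card *
        ∏ v : V, Set.ncard {u : V | u ≤ v}
        = k.factorial * (univ.filter (fun u : V => u ≤ m)).card := by
      intro m hm
      set W := {v : V // v ≠ m} with hW
      have hcardW : Fintype.card W = k := by
        have h1 : Fintype.card {v : V // ¬ v = m}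
            = Fintype.card V - Fintype.card {v : V // v = m} :=
          Fintype.card_subtype_compl _
        simp only [Fintype.card_subtype_eq] at h1
        rw [hcard] at h1
        exact h1
      have hchainW : ∀ v : W, IsChain (· ≤ ·) {u : W | v ≤ u} := by
        intro v a ha b hb hab
        have h := hchain v.1 (show v.1 ≤ a.1 from ha) (show v.1 ≤ b.1 from hb)
          (fun h => hab (Subtype.ext h))
        exact h.imp (fun h => h) (fun h => h)
      have ihW := ih W hcardW hchainW
      have hmE : ∀ f ∈ E.filter (fun f => f m = Fin.last k),
          Function.Bijective f ∧ (∀ u v : V, u ≤ v → f u ≤ f v) ∧ f m = Fin.last k := by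
        intro f hf
        rw [mem_filter, hE, mem_filter] at hf
        exact ⟨hf.1.2.1, hf.1.2.2, hf.2⟩
      have hlt : ∀ f ∈ E.filter (fun f => f m = Fin.last k), ∀ v : V, v ≠ m →
          (f v).val < k := by
        intro f hf v hv
        have hne : f v ≠ Fin.last k :=
          fun h => hv ((hmE f hf).1.1 (h.trans (hmE f hf).2.2.symm))
        have hle : (f v).val ≤ k := Nat.lt_succ_iff.mp (f v).isLt
        exact lt_of_le_of_ne hle (fun h => hne (Fin.ext (h.trans (Fin.val_last k).symm)))
      have hB : (E.filter (fun f => f m = Fin.last k)).card =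
          (univ.filter (fun g : W → Fin k =>
            Function.Bijective g ∧ ∀ u v : W, u ≤ v → g u ≤ g v)).card := by
        refine Finset.card_bij'
          (fun f hf => fun v : W => (⟨(f v.1).val, hlt f hf v.1 v.2⟩ : Fin k))
          (fun g _ => fun v : V => if h : v = m then Fin.last k else (g ⟨v, h⟩).castSucc)
          ?_ ?_ ?_ ?_
        · -- i maps into t
          intro f hf
          obtain ⟨⟨hinj, hsurj⟩, hmono, hlast⟩ := hmE f hf
          refine mem_filter.mpr ⟨mem_univ _, ⟨⟨?_, ?_⟩, ?_⟩⟩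
          · intro a b hab
            have hab' := congrArg Fin.val hab
            exact Subtype.ext (hinj (Fin.ext hab'))
          · intro b
            obtain ⟨v, hv⟩ := hsurj b.castSucc
            have hvne : v ≠ m := by
              intro h
              rw [h, hlast] at hv
              exact absurd hv.symm (ne_of_lt (Fin.castSucc_lt_last b))
            exact ⟨⟨v, hvne⟩, Fin.ext (by simp [hv])⟩
          · intro u v huv
            exact hmono u.1 v.1 huv
        · -- j maps into s
          intro g hg
          obtain ⟨hgbij, hgmono⟩ := (mem_filter.mp hg).2
          refine mem_filter.mpr ⟨mem_filter.mpr ⟨mem_univ _, ⟨⟨?_, ?_⟩, ?_⟩⟩, by simp⟩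
          · intro a b hab
            dsimp only at hab
            by_cases ha : a = m <;> by_cases hb : b = m
            · rw [ha, hb]
            · rw [dif_pos ha, dif_neg hb] at hab
              exact absurd hab.symm (ne_of_lt (Fin.castSucc_lt_last _))
            · rw [dif_neg ha, dif_pos hb] at hab
              exact absurd hab (ne_of_lt (Fin.castSucc_lt_last _))
            · rw [dif_neg ha, dif_neg hb] at hab
              have := hgbij.1 (Fin.castSucc_injective k hab)
              exact congrArg Subtype.val this
          · intro b
            by_cases hb : b = Fin.last k
            · refine ⟨m, ?_⟩
              dsimp only
              rw [dif_pos rfl, hb]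
            · have hblt : b.val < k := by
                have hle : b.val ≤ k := Nat.lt_succ_iff.mp b.isLt
                exact lt_of_le_of_ne hle
                  (fun h => hb (Fin.ext (h.trans (Fin.val_last k).symm)))
              obtain ⟨v, hv⟩ := hgbij.2 ⟨b.val, hblt⟩
              refine ⟨v.1, ?_⟩
              dsimp only
              rw [dif_neg v.2]
              apply Fin.ext
              simp [hv]
          · intro u v huv
            dsimp only
            by_cases hv : v = m
            · rw [dif_pos hv]; exact Fin.le_last _
            · have hu : u ≠ m := by
                intro h
                exact hv (((hmemM m).1 hm v (h ▸ huv)).symm ▸ rfl)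
              rw [dif_neg hu, dif_neg hv]
              exact Fin.castSucc_le_castSucc_iff.mpr (hgmono ⟨u, hu⟩ ⟨v, hv⟩ huv)
        · -- left inverse
          intro f hf
          funext v
          dsimp only
          by_cases hv : v = m
          · rw [dif_pos hv, hv, (hmE f hf).2.2]
          · rw [dif_neg hv]
            exact Fin.ext (by simp)
        · -- right inverse
          intro g hg
          funext v
          apply Fin.ext
          simp [dif_neg v.2]
      -- product over W vs product over V
      have hprodW : (∏ v : V, Set.ncard {u : V | u ≤ v})
          = Set.ncard {u : V | u ≤ m} * ∏ v : W, Set.ncard {u : W | u ≤ v} := by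
        rw [← Finset.mul_prod_erase univ (fun v => Set.ncard {u : V | u ≤ v}) (mem_univ m)]
        congr 1
        rw [Finset.prod_subtype (p := fun v : V => v ≠ m) (univ.erase m)
          (fun x => by simp) (fun v => Set.ncard {u : V | u ≤ v})]
        apply Finset.prod_congr rfl
        intro v _
        have himg : {u : V | u ≤ (v : V)} = Subtype.val '' {u : W | u ≤ v} := by
          ext u
          constructor
          · intro hu
            have hum : u ≠ m := by
              intro h
              exact v.2 ((hmemM m).1 hm v.1 (h ▸ hu))
            exact ⟨⟨u, hum⟩, hu, rfl⟩
          · rintro ⟨w, hw, rfl⟩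
            exact hw
        rw [himg, Set.ncard_image_of_injective _ Subtype.val_injective]
      have h1 : (univ.filter (fun g : W → Fin k =>
            Function.Bijective g ∧ ∀ u v : W, u ≤ v → g u ≤ g v)).card *
            ∏ v : W, Set.ncard {u : W | u ≤ v} = k.factorial := by
        rw [← ncard_setOf_eq]
        exact ihW
      calc (E.filter (fun f => f m = Fin.last k)).card * ∏ v : V, Set.ncard {u : V | u ≤ v}
          = (E.filter (fun f => f m = Fin.last k)).card *
              (Set.ncard {u : V | u ≤ m} * ∏ v : W, Set.ncard {u : W | u ≤ v}) := by
            rw [hprodW]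
        _ = ((E.filter (fun f => f m = Fin.last k)).card *
              ∏ v : W, Set.ncard {u : W | u ≤ v}) * Set.ncard {u : V | u ≤ m} := by
            ring
        _ = k.factorial * Set.ncard {u : V | u ≤ m} := by rw [hB, h1]
        _ = k.factorial * (univ.filter (fun u : V => u ≤ m)).card := by
            rw [ncard_setOf_eq]
    -- assemble
    rw [hEncard, hEpart, Finset.card_biUnion hdisj, Finset.sum_mul,
      Finset.sum_congr rfl hper, ← Finset.mul_sum, hsum, Nat.factorial_succ, mul_comm]

theorem tree_poset_linear_extensions (n : ℕ) (V : Type) [Fintype V] [PartialOrder V]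
    (hcard : Fintype.card V = n)
    (hchain : ∀ v : V, IsChain (· ≤ ·) {u : V | v ≤ u})
    (hroot : ∃ m : V, ∀ v, v ≤ m) :
    Set.ncard {f : V → Fin n | Function.Bijective f ∧ ∀ u v : V, u ≤ v → f u ≤ f v} *
        ∏ v : V, Set.ncard {u : V | u ≤ v} = n.factorial := by
  exact tree_key n V hcard hchain
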